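/- For every scoring matrix γ: dist_γ(s,t) ≥ 0 for all s,t ∈ Σ* if and only if γ(a,‐) ≥ 0, γ(‐,b) ≥ 0, and γ(a,b) ≥ 0 for all a,b ∈ Σ. -/

import Mathlib

open List

/-- A scoring matrix on alphabet `σ`; `none` represents the space symbol `‐`.
The value at `(none, none)` is irrelevant (never used on admissible columns). -/
abbrev Scoring (σ : Type*) := Option σ → Option σ → ℝ

/-- `A` is an alignment of the sequences `s` and `t`: a list of columns over
`Σ₋ × Σ₋` with no column `(‐,‐)`, whose first (resp. second) components with
spaces removed spell `s` (resp. `t`). -/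
def IsAlignment {σ : Type*} (A : List (Option σ × Option σ)) (s t : List σ) : Prop :=
  (∀ c ∈ A, c ≠ ((none : Option σ), (none : Option σ))) ∧
  A.filterMap Prod.fst = s ∧ A.filterMap Prod.snd = t

/-- The score of an alignment: the sum of `γ` over its columns. -/
def alignScore {σ : Type*} (γ : Scoring σ) (A : List (Option σ × Option σ)) : ℝ :=
  (A.map fun c => γ c.1 c.2).sum

/-- The weighted edit distance: minimum alignment score. -/
noncomputable def editDist {σ : Type*} (γ : Scoring σ) (s t : List σ) : ℝ :=
  sInf {x | ∃ A, IsAlignment A s t ∧ alignScore γ A = x}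

/-- The normalized edit distance: minimum normalized alignment score
(score divided by number of columns); for `s = t = ε` it is `0`. -/
noncomputable def ndist {σ : Type*} (γ : Scoring σ) (s t : List σ) : ℝ :=
  sInf {x | ∃ A, IsAlignment A s t ∧ alignScore γ A / (A.length : ℝ) = x}

/-- A walk in the digraph `D(γ)`: a list of vertices of `Σ₋` in which the
space `‐` never follows the space. -/
def IsWalkSeq {σ : Type*} (W : List (Option σ)) : Prop :=
  W.Chain' (fun a b => ¬(a = none ∧ b = none))

/-- The weight of a walk: the sum of the weights of its consecutive arcs. -/
def walkWeight {σ : Type*} (γ : Scoring σ) (W : List (Option σ)) : ℝ :=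
  ((W.zip W.tail).map fun p => γ p.1 p.2).sum

/-- `D(γ)` has a cycle of negative total weight (cycles start and end at a
vertex of `Σ`). -/
def HasNegCycle {σ : Type*} (γ : Scoring σ) : Prop :=
  ∃ (a : σ) (W : List (Option σ)),
    IsWalkSeq (some a :: (W ++ [some a])) ∧
    walkWeight γ (some a :: (W ++ [some a])) < 0

/-- The shortest-walk distance from `x` to `y` in `D(γ)`. -/
noncomputable def walkDist {σ : Type*} (γ : Scoring σ) (x y : Option σ) : ℝ :=
  sInf {w | ∃ W : List (Option σ), IsWalkSeq W ∧ W.head? = some x ∧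
    W.getLast? = some y ∧ walkWeight γ W = w}

/-- A column of an extended alignment: a nonempty sequence over `Σ₋`, with at
least one non-space symbol, no two consecutive spaces, and not having a space
at both ends. -/
def IsExtCol {σ : Type*} (c : List (Option σ)) : Prop :=
  c ≠ [] ∧ (∃ x ∈ c, x ≠ none) ∧
  c.Chain' (fun a b => ¬(a = none ∧ b = none)) ∧
  ¬(c.head? = some none ∧ c.getLast? = some none)

/-- An extended alignment of `s, t`: a list of admissible columns whose first
symbols (spaces removed) spell `s` and whose last symbols spell `t`. -/
def IsExtAlignment {σ : Type*} (E : List (List (Option σ))) (s t : List σ) : Prop :=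
  (∀ c ∈ E, IsExtCol c) ∧
  E.filterMap (fun c => c.head?.bind id) = s ∧
  E.filterMap (fun c => c.getLast?.bind id) = t

/-- The extended edit distance: minimum total score over extended alignments,
where the score of a column is the sum of `γ` over its consecutive pairs. -/
noncomputable def edist {σ : Type*} (γ : Scoring σ) (s t : List σ) : ℝ :=
  sInf {x | ∃ E, IsExtAlignment E s t ∧ (E.map (walkWeight γ)).sum = x}

/-- `f` is a premetric: `f x x = 0` and `f x y ≥ 0`. -/
def IsPremetric {σ : Type*} (f : List σ → List σ → ℝ) : Prop :=
  (∀ s, f s s = 0) ∧ (∀ s t, 0 ≤ f s t)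


section Helpers
variable {σ : Type*}

lemma align_left (γ : Scoring σ) (a : σ) {A : List (Option σ × Option σ)}
    (h : IsAlignment A [a] []) : A = [(some a, none)] := by
  obtain ⟨hne, hf, hs⟩ := h
  rw [List.filterMap_eq_nil_iff] at hs
  match A with
  | [] => simp at hf
  | c :: r =>
    have hc2 : c.2 = none := hs c (by simp)
    have hc1 : ∃ x, c.1 = some x := by
      cases h1 : c.1 with
      | none => exact absurd (Prod.ext h1 hc2) (hne c (by simp))
      | some x => exact ⟨x, rfl⟩
    obtain ⟨x, hc1⟩ := hc1
    rw [List.filterMap_cons, hc1] at hf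
    simp only [List.cons.injEq] at hf
    obtain ⟨hxa, hrest⟩ := hf
    have hr : r = [] := by
      match r with
      | [] => rfl
      | c' :: r' =>
        have h2 : c'.2 = none := hs c' (by simp)
        have h1 : c'.1 = none := by
          rw [List.filterMap_eq_nil_iff] at hrest
          exact hrest c' (by simp)
        exact absurd (Prod.ext h1 h2) (hne c' (by simp))
    subst hr hxa
    rw [show c = (c.1, c.2) from rfl, hc1, hc2]

lemma align_right (γ : Scoring σ) (b : σ) {A : List (Option σ × Option σ)}
    (h : IsAlignment A [] [b]) : A = [(none, some b)] := by
  obtain ⟨hne, hf, hs⟩ := h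
  rw [List.filterMap_eq_nil_iff] at hf
  match A with
  | [] => simp at hs
  | c :: r =>
    have hc1 : c.1 = none := hf c (by simp)
    have hc2 : ∃ y, c.2 = some y := by
      cases h2 : c.2 with
      | none => exact absurd (Prod.ext hc1 h2) (hne c (by simp))
      | some y => exact ⟨y, rfl⟩
    obtain ⟨y, hc2⟩ := hc2
    rw [List.filterMap_cons, hc2] at hs
    simp only [List.cons.injEq] at hs
    obtain ⟨hyb, hrest⟩ := hs
    have hr : r = [] := by
      match r with
      | [] => rfl
      | c' :: r' =>
        have h1 : c'.1 = none := hf c' (by simp)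
        have h2 : c'.2 = none := by
          rw [List.filterMap_eq_nil_iff] at hrest
          exact hrest c' (by simp)
        exact absurd (Prod.ext h1 h2) (hne c' (by simp))
    subst hr hyb
    rw [show c = (c.1, c.2) from rfl, hc1, hc2]

lemma align_pair (γ : Scoring σ) (a b : σ) {A : List (Option σ × Option σ)}
    (h : IsAlignment A [a] [b]) :
    A = [(some a, some b)] ∨ A = [(some a, none), (none, some b)] ∨
      A = [(none, some b), (some a, none)] := by
  obtain ⟨hne, hf, hs⟩ := h
  match A with
  | [] => simp at hf
  | c :: r =>
    cases h1 : c.1 with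
    | none =>
      cases h2 : c.2 with
      | none => exact absurd (Prod.ext h1 h2) (hne c (by simp))
      | some y =>
        rw [List.filterMap_cons, h1] at hf
        rw [List.filterMap_cons, h2] at hs
        simp only [List.cons.injEq] at hs
        obtain ⟨hyb, hrest⟩ := hs
        have : r = [(some a, none)] := align_left γ a
          ⟨fun c' hc' => hne c' (by simp [hc']), hf, hrest⟩
        subst this hyb
        right; right
        rw [show c = (c.1, c.2) from rfl, h1, h2]
    | some x =>
      rw [List.filterMap_cons, h1] at hf
      simp only [List.cons.injEq] at hf
      obtain ⟨hxa, hfrest⟩ := hf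
      cases h2 : c.2 with
      | none =>
        rw [List.filterMap_cons, h2] at hs
        have : r = [(none, some b)] := align_right γ b
          ⟨fun c' hc' => hne c' (by simp [hc']), hfrest, hs⟩
        subst this hxa
        right; left
        rw [show c = (c.1, c.2) from rfl, h1, h2]
      | some y =>
        rw [List.filterMap_cons, h2] at hs
        simp only [List.cons.injEq] at hs
        obtain ⟨hyb, hsrest⟩ := hs
        have hr : r = [] := by
          match r with
          | [] => rfl
          | c' :: r' =>
            rw [List.filterMap_eq_nil_iff] at hfrest hsrest
            exact absurd (Prod.ext (hfrest c' (by simp)) (hsrest c' (by simp)))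
              (hne c' (by simp))
        subst hr hxa hyb
        left
        rw [show c = (c.1, c.2) from rfl, h1, h2]

end Helpers

theorem stmt2 {σ : Type*} [Fintype σ] (γ : Scoring σ) :
    (∀ s t : List σ, 0 ≤ editDist γ s t) ↔
      (∀ a b : σ, 0 ≤ γ (some a) none ∧ 0 ≤ γ none (some b) ∧ 0 ≤ γ (some a) (some b)) := by
  constructor
  · intro h
    intro a b
    refine ⟨?_, ?_, ?_⟩
    · have h0 := h [a] []
      have hset : {x | ∃ A, IsAlignment A [a] [] ∧ alignScore γ A = x}
          = {γ (some a) none} := by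
        ext x
        simp only [Set.mem_setOf_eq, Set.mem_singleton_iff]
        constructor
        · rintro ⟨A, hA, rfl⟩
          rw [align_left γ a hA]
          simp [alignScore]
        · rintro rfl
          exact ⟨[(some a, none)], by simp [IsAlignment], by simp [alignScore]⟩
      rw [editDist, hset, csInf_singleton] at h0
      exact h0
    · have h0 := h [] [b]
      have hset : {x | ∃ A, IsAlignment A [] [b] ∧ alignScore γ A = x}
          = {γ none (some b)} := by
        ext x
        simp only [Set.mem_setOf_eq, Set.mem_singleton_iff]
        constructor
        · rintro ⟨A, hA, rfl⟩
          rw [align_right γ b hA]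
          simp [alignScore]
        · rintro rfl
          exact ⟨[(none, some b)], by simp [IsAlignment], by simp [alignScore]⟩
      rw [editDist, hset, csInf_singleton] at h0
      exact h0
    · have h0 := h [a] [b]
      set S := {x | ∃ A, IsAlignment A [a] [b] ∧ alignScore γ A = x} with hS
      have hsub : S ⊆ {γ (some a) (some b), γ (some a) none + γ none (some b)} := by
        rintro x ⟨A, hA, rfl⟩
        rcases align_pair γ a b hA with h1 | h1 | h1 <;> subst h1 <;>
          simp [alignScore] <;> ring_nf <;> simp [add_comm]
      have hbdd : BddBelow S :=
        (Set.Finite.bddBelow ((Set.finite_singleton _).insert _)).mono hsub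
      have hmem : γ (some a) (some b) ∈ S :=
        ⟨[(some a, some b)], by simp [IsAlignment], by simp [alignScore]⟩
      exact h0.trans (csInf_le hbdd hmem)
  · intro h s t
    apply Real.sInf_nonneg
    rintro x ⟨A, ⟨hne, -, -⟩, rfl⟩
    apply List.sum_nonneg
    intro y hy
    simp only [List.mem_map] at hy
    obtain ⟨c, hc, rfl⟩ := hy
    match h1 : c.1, h2 : c.2 with
    | none, none => exact absurd (Prod.ext h1 h2) (hne c hc)
    | some x, none => exact (h x x).1
    | none, some y => exact (h y y).2.1
    | some x, some y => exact (h x y).2.2
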